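/- The function h(x) = sign(x)·( (1/√2)·arcsin( (3(1−√(1−x²))−2)/(√(1−x²)+1) ) + π/2^{3/2} ) is strictly increasing on [−1,1], is an odd function, and maps [−1,1] onto [−π/√2, π/√2]. -/

import Mathlib

noncomputable def h (x : ℝ) : ℝ :=
  Real.sign x * ((1 / Real.sqrt 2) *
      Real.arcsin ((3 * (1 - Real.sqrt (1 - x ^ 2)) - 2) / (Real.sqrt (1 - x ^ 2) + 1))
    + Real.pi / (2 : ℝ) ^ ((3 : ℝ) / 2))

noncomputable def g (x : ℝ) : ℝ :=
  (1 / Real.sqrt 2) *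
      Real.arcsin ((3 * (1 - Real.sqrt (1 - x ^ 2)) - 2) / (Real.sqrt (1 - x ^ 2) + 1))
    + Real.pi / (2 : ℝ) ^ ((3 : ℝ) / 2)

lemma two_rpow : (2 : ℝ) ^ ((3 : ℝ) / 2) = 2 * Real.sqrt 2 := by
  rw [show (3:ℝ)/2 = 1 + 1/2 by norm_num, Real.rpow_add (by norm_num), Real.rpow_one,
    ← Real.sqrt_eq_rpow]

lemma sqrt_mem (x : ℝ) (hx : x ∈ Set.Icc (0:ℝ) 1) : Real.sqrt (1 - x ^ 2) ∈ Set.Icc (0:ℝ) 1 := by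
  obtain ⟨h0, h1⟩ := hx
  refine ⟨Real.sqrt_nonneg _, ?_⟩
  calc Real.sqrt (1 - x ^ 2) ≤ Real.sqrt 1 := Real.sqrt_le_sqrt (by nlinarith)
    _ = 1 := Real.sqrt_one

lemma quot_mem (u : ℝ) (h0 : 0 ≤ u) (h1 : u ≤ 1) :
    (3 * (1 - u) - 2) / (u + 1) ∈ Set.Icc (-1 : ℝ) 1 := by
  constructor
  · rw [le_div_iff₀ (by linarith)]; linarith
  · rw [div_le_one (by linarith)]; linarith

lemma quot_lt (u v : ℝ) (h0 : 0 ≤ u) (huv : u < v) :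
    (3 * (1 - v) - 2) / (v + 1) < (3 * (1 - u) - 2) / (u + 1) := by
  rw [div_lt_div_iff₀ (by linarith) (by linarith)]
  nlinarith

lemma g_mono : StrictMonoOn g (Set.Icc (0:ℝ) 1) := by
  intro x hx y hy hxy
  unfold g
  apply (add_lt_add_iff_right _).2
  apply mul_lt_mul_of_pos_left _ (by positivity)
  have hsx := sqrt_mem x hx
  have hsy := sqrt_mem y hy
  have hlt : Real.sqrt (1 - y ^ 2) < Real.sqrt (1 - x ^ 2) := by
    apply Real.sqrt_lt_sqrt (by nlinarith [hy.1, hy.2])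
    nlinarith [hx.1]
  exact Real.strictMonoOn_arcsin (quot_mem _ hsx.1 hsx.2) (quot_mem _ hsy.1 hsy.2)
    (quot_lt _ _ hsy.1 hlt)

lemma g_zero : g 0 = 0 := by
  have h2 : Real.sqrt 2 ≠ 0 := by positivity
  simp only [g, two_rpow]
  norm_num [Real.sqrt_one, Real.arcsin_neg_one]
  field_simp
  ring

lemma g_one : g 1 = Real.pi / Real.sqrt 2 := by
  have h2 : Real.sqrt 2 ≠ 0 := by positivity
  simp only [g, two_rpow]
  norm_num [Real.sqrt_zero, Real.arcsin_one]
  field_simp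
  ring

lemma g_cont : Continuous g := by
  unfold g
  have hden : ∀ x : ℝ, Real.sqrt (1 - x ^ 2) + 1 ≠ 0 := fun x => by positivity
  apply Continuous.add _ continuous_const
  apply Continuous.mul continuous_const
  apply Real.continuous_arcsin.comp
  exact Continuous.div (by fun_prop) (by fun_prop) hden

lemma h_eq_g {x : ℝ} (hx : 0 ≤ x) : h x = g x := by
  rcases eq_or_lt_of_le hx with rfl | hx'
  · rw [g_zero]; simp [h, Real.sign_zero]
  · rw [h, Real.sign_of_pos hx', one_mul]; rfl

lemma h_odd (x : ℝ) : h (-x) = -h x := by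
  unfold h
  rw [neg_sq, Real.sign_neg, neg_mul]

theorem stmt2 :
    StrictMonoOn h (Set.Icc (-1 : ℝ) 1)
    ∧ (∀ x : ℝ, h (-x) = -h x)
    ∧ h '' Set.Icc (-1 : ℝ) 1 = Set.Icc (-(Real.pi / Real.sqrt 2)) (Real.pi / Real.sqrt 2) := by
  have hc : 0 ≤ Real.pi / Real.sqrt 2 := by positivity
  have hpos : ∀ x : ℝ, 0 < x → x ≤ 1 → 0 < g x := by
    intro x h0 h1
    have := g_mono ⟨le_refl 0, by norm_num⟩ ⟨le_of_lt h0, h1⟩ h0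
    rwa [g_zero] at this
  have hmono : StrictMonoOn h (Set.Icc (-1 : ℝ) 1) := by
    intro x hx y hy hxy
    rcases le_or_gt 0 x with h0x | h0x
    · rw [h_eq_g h0x, h_eq_g (by linarith)]
      exact g_mono ⟨h0x, hx.2⟩ ⟨by linarith, hy.2⟩ hxy
    · rcases le_or_gt y 0 with h0y | h0y
      · have hx' : h x = -g (-x) := by rw [← h_eq_g (by linarith), ← h_odd, neg_neg]
        have hy' : h y = -g (-y) := by rw [← h_eq_g (by linarith), ← h_odd, neg_neg]
        rw [hx', hy', neg_lt_neg_iff]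
        exact g_mono ⟨by linarith, by linarith [hy.1]⟩ ⟨by linarith, by linarith [hx.1]⟩
          (by linarith)
      · have hx' : h x = -g (-x) := by rw [← h_eq_g (by linarith), ← h_odd, neg_neg]
        rw [hx', h_eq_g (le_of_lt h0y)]
        have h1 : 0 < g (-x) := hpos _ (by linarith) (by linarith [hx.1])
        have h2 : 0 < g y := hpos _ h0y hy.2
        linarith
  refine ⟨hmono, h_odd, ?_⟩
  -- image of [0,1] under g
  have himg1 : g '' Set.Icc 0 1 = Set.Icc 0 (Real.pi / Real.sqrt 2) := by
    apply Set.Subset.antisymm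
    · rintro z ⟨x, hx, rfl⟩
      rcases eq_or_lt_of_le hx.1 with rfl | hx0
      · rw [g_zero]; exact ⟨le_refl 0, hc⟩
      constructor
      · exact le_of_lt (hpos x hx0 hx.2)
      · rcases eq_or_lt_of_le hx.2 with rfl | hx1
        · rw [g_one]
        · rw [← g_one]
          exact le_of_lt (g_mono hx ⟨by norm_num, le_refl 1⟩ hx1)
    · have := intermediate_value_Icc (by norm_num : (0:ℝ) ≤ 1) g_cont.continuousOn
      rwa [g_zero, g_one] at this
  have himg1h : h '' Set.Icc 0 1 = Set.Icc 0 (Real.pi / Real.sqrt 2) := by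
    rw [← himg1]
    exact Set.image_congr fun x hx => h_eq_g hx.1
  have himg2 : h '' Set.Icc (-1 : ℝ) 0 = Set.Icc (-(Real.pi / Real.sqrt 2)) 0 := by
    ext z
    constructor
    · rintro ⟨x, hx, rfl⟩
      have hmx : h (-x) ∈ Set.Icc 0 (Real.pi / Real.sqrt 2) := by
        rw [← himg1h]
        exact ⟨-x, ⟨by linarith [hx.2], by linarith [hx.1]⟩, rfl⟩
      have : h x = -h (-x) := by rw [h_odd, neg_neg]
      rw [this]
      exact ⟨by linarith [hmx.2], by linarith [hmx.1]⟩
    · intro hz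
      have : -z ∈ Set.Icc 0 (Real.pi / Real.sqrt 2) := ⟨by linarith [hz.2], by linarith [hz.1]⟩
      rw [← himg1h] at this
      obtain ⟨x, hx, hxz⟩ := this
      exact ⟨-x, ⟨by linarith [hx.2], by linarith [hx.1]⟩, by rw [h_odd, hxz, neg_neg]⟩
  rw [show Set.Icc (-1 : ℝ) 1 = Set.Icc (-1 : ℝ) 0 ∪ Set.Icc 0 1 from
      (Set.Icc_union_Icc_eq_Icc (by norm_num) (by norm_num)).symm,
    Set.image_union, himg2, himg1h]
  exact Set.Icc_union_Icc_eq_Icc (by linarith) hc
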